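/- Fix a real number c, and for each integer n ≥ 2 let m = ⌊c(n−1)⌋. If 0 < c ≤ 1, then lim_{n→∞} C_m(n,n,n)/n² = c²/2 and lim_{n→∞} S_m(n,n,n)/n³ = c³/6. If 1 < c ≤ 3/2, then lim_{n→∞} C_m(n,n,n)/n² = −c² + 3c − 3/2 and lim_{n→∞} S_m(n,n,n)/n³ = −c³/3 + 3c²/2 − 3c/2 + 1/2. -/

import Mathlib

open Filter

/-- `C_m(a,b,c)`: the number of triples `(x, y, z)` with `0 ≤ x ≤ a - 1`,
`0 ≤ y ≤ b - 1`, `0 ≤ z ≤ c - 1`, and `x + y + z = m`. -/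
def C3 (a b c m : ℕ) : ℕ :=
  Fintype.card {p : Fin a × Fin b × Fin c // (p.1 : ℕ) + (p.2.1 : ℕ) + (p.2.2 : ℕ) = m}

/-- `S_m(a,b,c)`: the number of triples `(x, y, z)` with `0 ≤ x ≤ a - 1`,
`0 ≤ y ≤ b - 1`, `0 ≤ z ≤ c - 1`, and `x + y + z ≤ m`. -/
def S3 (a b c m : ℕ) : ℕ :=
  Fintype.card {p : Fin a × Fin b × Fin c // (p.1 : ℕ) + (p.2.1 : ℕ) + (p.2.2 : ℕ) ≤ m}

open Finset

lemma pairs_card (n k : ℕ) :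
    ((range n ×ˢ range n).filter (fun q : ℕ × ℕ => q.1 + q.2 = k)).card
      = min (k+1) n - (k+1-n) := by
  have h : ((range n ×ˢ range n).filter (fun q : ℕ × ℕ => q.1 + q.2 = k))
      = (Finset.Ico (k+1-n) (min (k+1) n)).image (fun y => (y, k - y)) := by
    ext ⟨y, z⟩
    simp only [Finset.mem_filter, Finset.mem_product, Finset.mem_range,
      Finset.mem_image, Finset.mem_Ico, lt_min_iff, Prod.mk.injEq]
    constructor
    · rintro ⟨⟨hy, hz⟩, he⟩
      exact ⟨y, ⟨by omega, by omega, hy⟩, rfl, by omega⟩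
    · rintro ⟨a, ⟨h1, h2, h3⟩, rfl, rfl⟩
      omega
  rw [h, Finset.card_image_of_injective _ (fun a b e => (Prod.mk.injEq _ _ _ _).mp e |>.1),
    Nat.card_Ico]

lemma C3_eq_card (n m : ℕ) : C3 n n n m =
    ((range n ×ˢ range n ×ˢ range n).filter
      (fun p : ℕ × ℕ × ℕ => p.1 + p.2.1 + p.2.2 = m)).card := by
  rw [C3, Fintype.card_subtype]
  apply Finset.card_bij (fun p _ => ((p.1 : ℕ), (p.2.1 : ℕ), (p.2.2 : ℕ)))
  · rintro ⟨x, y, z⟩ h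
    simp only [Finset.mem_filter, Finset.mem_univ, true_and] at h
    simp [Finset.mem_filter, Finset.mem_product, x.isLt, y.isLt, z.isLt, h]
  · rintro ⟨x, y, z⟩ h ⟨x', y', z'⟩ h' e
    simp only [Prod.mk.injEq] at e
    ext <;> simp [e.1, e.2.1, e.2.2]
  · rintro ⟨x, y, z⟩ h
    simp only [Finset.mem_filter, Finset.mem_product, Finset.mem_range] at h
    exact ⟨(⟨x, h.1.1⟩, ⟨y, h.1.2.1⟩, ⟨z, h.1.2.2⟩), by simp [h.2], rfl⟩

lemma C3_eq_sum (n m : ℕ) : C3 n n n m =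
    ∑ x ∈ range n, (if x ≤ m then min (m - x + 1) n - (m - x + 1 - n) else 0) := by
  rw [C3_eq_card, Finset.card_filter, Finset.sum_product]
  refine Finset.sum_congr rfl fun x hx => ?_
  have h1 : (∑ y ∈ range n ×ˢ range n,
      if (x, y).1 + (x, y).2.1 + (x, y).2.2 = m then 1 else 0)
      = ((range n ×ˢ range n).filter (fun q : ℕ × ℕ => x + q.1 + q.2 = m)).card := by
    rw [Finset.card_filter]
  rw [h1]
  by_cases hxm : x ≤ m
  · have h2 : ((range n ×ˢ range n).filter (fun q : ℕ × ℕ => x + q.1 + q.2 = m))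
        = ((range n ×ˢ range n).filter (fun q : ℕ × ℕ => q.1 + q.2 = m - x)) := by
      apply Finset.filter_congr
      intro q _
      constructor <;> intro h <;> omega
    rw [if_pos hxm, h2, pairs_card]
  · have h2 : ((range n ×ˢ range n).filter (fun q : ℕ × ℕ => x + q.1 + q.2 = m)) = ∅ := by
      apply Finset.filter_false_of_mem
      intro q _
      omega
    rw [if_neg hxm, h2, Finset.card_empty]

lemma sum_asc (N : ℕ) (a : ℤ) : 2 * ∑ x ∈ range N, (a + x) = N * (2*a + N - 1) := by
  induction N with
  | zero => simp
  | succ k ih =>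
    rw [Finset.sum_range_succ, mul_add, ih]
    push_cast
    ring

lemma sum_desc (N : ℕ) (a : ℤ) : 2 * ∑ x ∈ range N, (a - x) = N * (2*a - N + 1) := by
  induction N with
  | zero => simp
  | succ k ih =>
    rw [Finset.sum_range_succ, mul_add, ih]
    push_cast
    ring

lemma sum_quad (N : ℕ) : 3 * ∑ x ∈ range N, ((x:ℤ)+1)*((x:ℤ)+2) = N*(N+1)*(N+2) := by
  induction N with
  | zero => simp
  | succ k ih =>
    rw [Finset.sum_range_succ, mul_add, ih]
    push_cast
    ring

lemma C3_case1 (n m : ℕ) (h : m < n) : 2 * (C3 n n n m : ℤ) = (m+1)*(m+2) := by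
  rw [C3_eq_sum]
  have h1 : ∑ x ∈ range n, (if x ≤ m then min (m - x + 1) n - (m - x + 1 - n) else 0)
      = ∑ x ∈ range (m+1), (m + 1 - x) := by
    rw [← Finset.sum_filter]
    have : (range n).filter (· ≤ m) = range (m+1) := by
      ext x; simp [Finset.mem_filter]; omega
    rw [this]
    refine Finset.sum_congr rfl fun x hx => ?_
    simp only [Finset.mem_range] at hx
    omega
  rw [h1, Nat.cast_sum]
  have h2 : ∑ x ∈ range (m+1), ((m + 1 - x : ℕ) : ℤ)
      = ∑ x ∈ range (m+1), (((m:ℤ)+1) - (x:ℤ)) := by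
    refine Finset.sum_congr rfl fun x hx => ?_
    simp only [Finset.mem_range] at hx
    omega
  rw [h2, sum_desc]
  push_cast
  ring

lemma C3_case2 (n m : ℕ) (hn : 2 ≤ n) (h1 : n ≤ m) (h2 : m ≤ 2*n-2) :
    2 * (C3 n n n m : ℤ) = (m+1)*(m+2) - 3*((m:ℤ)+1-n)*((m:ℤ)+2-n) := by
  rw [C3_eq_sum]
  have hsplit : ∑ x ∈ range n, (if x ≤ m then min (m - x + 1) n - (m - x + 1 - n) else 0)
      = ∑ x ∈ range (m+1-n), (2*n - 1 - m + x) + ∑ x ∈ Ico (m+1-n) n, (m + 1 - x) := by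
    rw [Finset.range_eq_Ico, ← Finset.sum_Ico_consecutive _ (Nat.zero_le (m+1-n)) (by omega : m+1-n ≤ n),
      ← Finset.range_eq_Ico]
    congr 1
    · refine Finset.sum_congr rfl fun x hx => ?_
      simp only [Finset.mem_range] at hx
      rw [if_pos (by omega)]
      omega
    · refine Finset.sum_congr rfl fun x hx => ?_
      simp only [Finset.mem_Ico] at hx
      rw [if_pos (by omega)]
      omega
  rw [hsplit, Nat.cast_add, Nat.cast_sum, Nat.cast_sum]
  have e1 : ∑ x ∈ range (m+1-n), ((2*n - 1 - m + x : ℕ) : ℤ)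
      = ∑ x ∈ range (m+1-n), ((2*(n:ℤ) - 1 - m) + (x:ℤ)) := by
    refine Finset.sum_congr rfl fun x hx => ?_
    omega
  have e2 : ∑ x ∈ Ico (m+1-n) n, ((m + 1 - x : ℕ) : ℤ)
      = ∑ x ∈ Ico (m+1-n) n, (((m:ℤ)+1) - (x:ℤ)) := by
    refine Finset.sum_congr rfl fun x hx => ?_
    simp only [Finset.mem_Ico] at hx
    omega
  rw [e1, e2, Finset.sum_Ico_eq_sum_range]
  have e3 : ∑ i ∈ range (n - (m+1-n)), (((m:ℤ)+1) - ((m+1-n) + i : ℕ)) =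
      ∑ i ∈ range (n - (m+1-n)), (((n:ℤ)) - (i:ℤ)) := by
    refine Finset.sum_congr rfl fun i hi => ?_
    push_cast
    omega
  rw [e3]
  have ha := sum_asc (m+1-n) (2*(n:ℤ) - 1 - m)
  have hb := sum_desc (n - (m+1-n)) ((n:ℤ))
  have c1 : ((m+1-n : ℕ) : ℤ) = (m:ℤ) + 1 - n := by omega
  have c2 : ((n - (m+1-n) : ℕ) : ℤ) = 2*(n:ℤ) - m - 1 := by omega
  rw [mul_add, ha, hb, c1, c2]
  ring

lemma S3_eq (n m : ℕ) : S3 n n n m = ∑ j ∈ range (m+1), C3 n n n j := by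
  rw [S3, Fintype.card_subtype]
  rw [Finset.card_eq_sum_card_fiberwise
    (f := fun p : Fin n × Fin n × Fin n => (p.1 : ℕ) + (p.2.1 : ℕ) + (p.2.2 : ℕ))
    (t := range (m+1))
    (by intro p hp; simp only [Finset.mem_coe, Finset.mem_filter] at hp; simp only [Finset.mem_coe, Finset.mem_range]; omega)]
  refine Finset.sum_congr rfl fun j hj => ?_
  simp only [Finset.mem_range] at hj
  rw [C3, Fintype.card_subtype]
  congr 1
  ext p
  simp only [Finset.mem_filter, Finset.mem_univ, true_and]
  constructor
  · rintro ⟨-, h⟩; exact h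
  · intro h; exact ⟨by omega, h⟩

lemma S3_case1 (n m : ℕ) (h : m < n) : 6 * (S3 n n n m : ℤ) = (m+1)*(m+2)*(m+3) := by
  rw [S3_eq, Nat.cast_sum]
  have h1 : ∑ j ∈ range (m+1), 2*(C3 n n n j : ℤ)
      = ∑ j ∈ range (m+1), ((j:ℤ)+1)*((j:ℤ)+2) := by
    refine Finset.sum_congr rfl fun j hj => ?_
    simp only [Finset.mem_range] at hj
    exact C3_case1 n j (by omega)
  have h2 := sum_quad (m+1)
  rw [← h1] at h2
  rw [← Finset.mul_sum] at h2
  push_cast at h2 ⊢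
  linarith

lemma S3_case2 (n m : ℕ) (hn : 2 ≤ n) (h1 : n ≤ m) (h2 : m ≤ 2*n-2) :
    6 * (S3 n n n m : ℤ) = (m+1)*(m+2)*(m+3)
      - 3*((m:ℤ)+1-n)*((m:ℤ)+2-n)*((m:ℤ)+3-n) := by
  rw [S3_eq, Nat.cast_sum]
  have key : ∀ j ∈ range (m+1), 2*(C3 n n n j : ℤ)
      = ((j:ℤ)+1)*((j:ℤ)+2) - 3 * (if n ≤ j then ((j:ℤ)+1-n)*((j:ℤ)+2-n) else 0) := by
    intro j hj
    simp only [Finset.mem_range] at hj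
    by_cases hj2 : n ≤ j
    · rw [if_pos hj2, C3_case2 n j hn hj2 (by omega)]; ring
    · rw [if_neg hj2, C3_case1 n j (by omega)]; ring
  have hsum : ∑ j ∈ range (m+1), 2*(C3 n n n j : ℤ)
      = ∑ j ∈ range (m+1), (((j:ℤ)+1)*((j:ℤ)+2))
        - 3 * ∑ j ∈ range (m+1), (if n ≤ j then ((j:ℤ)+1-n)*((j:ℤ)+2-n) else 0) := by
    rw [Finset.sum_congr rfl key, Finset.sum_sub_distrib, ← Finset.mul_sum]
  have hcorr : ∑ j ∈ range (m+1), (if n ≤ j then ((j:ℤ)+1-n)*((j:ℤ)+2-n) else 0)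
      = ∑ i ∈ range (m+1-n), ((i:ℤ)+1)*((i:ℤ)+2) := by
    rw [← Finset.sum_filter]
    have : (range (m+1)).filter (fun j => n ≤ j) = Ico n (m+1) := by
      ext j; simp only [Finset.mem_filter, Finset.mem_range, Finset.mem_Ico]; omega
    rw [this, Finset.sum_Ico_eq_sum_range]
    refine Finset.sum_congr rfl fun i hi => ?_
    push_cast
    ring
  have q1 := sum_quad (m+1)
  have q2 := sum_quad (m+1-n)
  have c1 : ((m+1-n : ℕ) : ℤ) = (m:ℤ) + 1 - n := by omega
  rw [c1] at q2
  rw [hcorr] at hsum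
  have e : ∑ j ∈ range (m+1), 2*(C3 n n n j : ℤ) = 2 * ∑ j ∈ range (m+1), (C3 n n n j : ℤ) := by
    rw [Finset.mul_sum]
  rw [e] at hsum
  push_cast at q1 hsum ⊢
  linarith

lemma floor_div_tendsto (c : ℝ) (hc : 0 < c) :
    Tendsto (fun n : ℕ => ((⌊c * ((n:ℝ)-1)⌋₊ : ℕ) : ℝ) / n) atTop (nhds c) := by
  have he : Tendsto (fun n : ℕ => 1/(n:ℝ)) atTop (nhds 0) :=
    tendsto_one_div_atTop_nhds_zero_nat
  have hlow : Tendsto (fun n : ℕ => c - (c+1)*(1/(n:ℝ))) atTop (nhds c) := by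
    have := (tendsto_const_nhds (x := c)).sub (he.const_mul (c+1))
    simpa using this
  have hupp : Tendsto (fun n : ℕ => c - c*(1/(n:ℝ))) atTop (nhds c) := by
    have := (tendsto_const_nhds (x := c)).sub (he.const_mul c)
    simpa using this
  apply tendsto_of_tendsto_of_tendsto_of_le_of_le' hlow hupp
  · filter_upwards [eventually_ge_atTop 1] with n hn
    have hn0 : (0:ℝ) < n := by exact_mod_cast hn
    have hfl : c * ((n:ℝ)-1) - 1 ≤ (⌊c * ((n:ℝ)-1)⌋₊ : ℝ) :=
      le_of_lt (Nat.sub_one_lt_floor _)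
    have h2 : (c * ((n:ℝ)-1) - 1) / n ≤ (⌊c * ((n:ℝ)-1)⌋₊ : ℝ) / n := by
      gcongr
    calc c - (c+1)*(1/(n:ℝ)) = (c * ((n:ℝ)-1) - 1) / n := by
          field_simp
          ring
      _ ≤ _ := h2
  · filter_upwards [eventually_ge_atTop 1] with n hn
    have hn0 : (0:ℝ) < n := by exact_mod_cast hn
    have h1 : (1:ℝ) ≤ n := by exact_mod_cast hn
    have hfl : (⌊c * ((n:ℝ)-1)⌋₊ : ℝ) ≤ c * ((n:ℝ)-1) :=
      Nat.floor_le (by nlinarith)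
    calc (⌊c * ((n:ℝ)-1)⌋₊ : ℝ) / n ≤ (c * ((n:ℝ)-1)) / n := by gcongr
      _ = c - c*(1/(n:ℝ)) := by field_simp

/-- Fix a real `c` and, for each `n ≥ 2`, let `m = ⌊c(n-1)⌋`.
If `0 < c ≤ 1` then `C_m(n,n,n)/n² → c²/2` and `S_m(n,n,n)/n³ → c³/6`;
if `1 < c ≤ 3/2` then `C_m(n,n,n)/n² → -c² + 3c - 3/2` and
`S_m(n,n,n)/n³ → -c³/3 + 3c²/2 - 3c/2 + 1/2`. -/
theorem slice_counts_cube (c : ℝ) :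
    ((0 < c ∧ c ≤ 1) →
      Tendsto (fun n : ℕ => (C3 n n n ⌊c * ((n : ℝ) - 1)⌋₊ : ℝ) / (n : ℝ) ^ 2) atTop
          (nhds (c ^ 2 / 2)) ∧
      Tendsto (fun n : ℕ => (S3 n n n ⌊c * ((n : ℝ) - 1)⌋₊ : ℝ) / (n : ℝ) ^ 3) atTop
          (nhds (c ^ 3 / 6))) ∧
    ((1 < c ∧ c ≤ 3 / 2) →
      Tendsto (fun n : ℕ => (C3 n n n ⌊c * ((n : ℝ) - 1)⌋₊ : ℝ) / (n : ℝ) ^ 2) atTop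
          (nhds (-c ^ 2 + 3 * c - 3 / 2)) ∧
      Tendsto (fun n : ℕ => (S3 n n n ⌊c * ((n : ℝ) - 1)⌋₊ : ℝ) / (n : ℝ) ^ 3) atTop
          (nhds (-c ^ 3 / 3 + 3 * c ^ 2 / 2 - 3 * c / 2 + 1 / 2))) := by
  set A : ℕ → ℝ := fun n => ((⌊c * ((n:ℝ)-1)⌋₊ : ℕ) : ℝ) / n with hA
  set E : ℕ → ℝ := fun n => 1 / (n:ℝ) with hE
  have he : Tendsto E atTop (nhds 0) := tendsto_one_div_atTop_nhds_zero_nat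
  constructor
  · rintro ⟨hc0, hc1⟩
    have ha : Tendsto A atTop (nhds c) := floor_div_tendsto c hc0
    have hmlt : ∀ᶠ n : ℕ in atTop, ⌊c * ((n:ℝ)-1)⌋₊ < n := by
      filter_upwards [eventually_ge_atTop 1] with n hn
      have h1 : (1:ℝ) ≤ n := by exact_mod_cast hn
      have hle : c * ((n:ℝ)-1) ≤ (((n-1 : ℕ)):ℝ) := by
        rw [Nat.cast_sub hn]
        push_cast
        nlinarith
      have := Nat.floor_le_floor hle
      rw [Nat.floor_natCast] at this
      omega
    constructor
    · have hfin : Tendsto (fun n => ((A n + E n) * (A n + 2 * E n)) / 2) atTop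
          (nhds (c ^ 2 / 2)) := by
        have h := ((ha.add he).mul (ha.add (he.const_mul 2))).div_const 2
        have hv : (c + 0) * (c + 2 * 0) / 2 = c ^ 2 / 2 := by ring
        rwa [hv] at h
      refine Tendsto.congr' ?_ hfin
      filter_upwards [eventually_ge_atTop 1, hmlt] with n hn hm
      have hn0 : (n:ℝ) ≠ 0 := by positivity
      set m := ⌊c * ((n:ℝ)-1)⌋₊ with hmm
      have h3 : 2 * ((C3 n n n m : ℤ) : ℝ) = ((m:ℝ)+1)*((m:ℝ)+2) := by
        exact_mod_cast congrArg (fun z : ℤ => (z:ℝ)) (C3_case1 n m hm)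
      push_cast at h3
      have hc3 : (C3 n n n m : ℝ) = ((m:ℝ)+1)*((m:ℝ)+2) / 2 := by linarith
      simp only [hA, hE]
      rw [hc3]
      field_simp
      ring
    · have hfin : Tendsto (fun n => ((A n + E n) * (A n + 2 * E n) * (A n + 3 * E n)) / 6)
          atTop (nhds (c ^ 3 / 6)) := by
        have h := (((ha.add he).mul (ha.add (he.const_mul 2))).mul
          (ha.add (he.const_mul 3))).div_const 6
        have hv : (c + 0) * (c + 2 * 0) * (c + 3 * 0) / 6 = c ^ 3 / 6 := by ring
        rwa [hv] at h
      refine Tendsto.congr' ?_ hfin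
      filter_upwards [eventually_ge_atTop 1, hmlt] with n hn hm
      have hn0 : (n:ℝ) ≠ 0 := by positivity
      set m := ⌊c * ((n:ℝ)-1)⌋₊ with hmm
      have h3 : 6 * ((S3 n n n m : ℤ) : ℝ) = ((m:ℝ)+1)*((m:ℝ)+2)*((m:ℝ)+3) := by
        exact_mod_cast congrArg (fun z : ℤ => (z:ℝ)) (S3_case1 n m hm)
      push_cast at h3
      have hc3 : (S3 n n n m : ℝ) = ((m:ℝ)+1)*((m:ℝ)+2)*((m:ℝ)+3) / 6 := by linarith
      simp only [hA, hE]
      rw [hc3]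
      field_simp
      ring
  · rintro ⟨hc1, hc2⟩
    have hc0 : 0 < c := by linarith
    have ha : Tendsto A atTop (nhds c) := floor_div_tendsto c hc0
    have hd : 0 < c - 1 := by linarith
    have hfacts : ∀ᶠ n : ℕ in atTop,
        2 ≤ n ∧ n ≤ ⌊c * ((n:ℝ)-1)⌋₊ ∧ ⌊c * ((n:ℝ)-1)⌋₊ ≤ 2*n-2 := by
      filter_upwards [eventually_ge_atTop 2,
        (tendsto_natCast_atTop_atTop (R := ℝ)).eventually_ge_atTop (c/(c-1))] with n hn hcn
      have h2 : (2:ℝ) ≤ n := by exact_mod_cast hn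
      have hcn' : c ≤ (n:ℝ) * (c - 1) := (div_le_iff₀ hd).mp hcn
      refine ⟨hn, ?_, ?_⟩
      · apply Nat.le_floor
        nlinarith
      · have hfl : (⌊c * ((n:ℝ)-1)⌋₊ : ℝ) ≤ c * ((n:ℝ)-1) := Nat.floor_le (by nlinarith)
        have : (⌊c * ((n:ℝ)-1)⌋₊ : ℝ) ≤ ((2*n-2 : ℕ) : ℝ) := by
          rw [Nat.cast_sub (by omega : 2 ≤ 2*n)]
          push_cast
          nlinarith
        exact_mod_cast this
    constructor
    · have hfin : Tendsto (fun n => ((A n + E n) * (A n + 2 * E n)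
          - 3 * ((A n + E n) - 1) * ((A n + 2 * E n) - 1)) / 2) atTop
          (nhds (-c ^ 2 + 3 * c - 3 / 2)) := by
        have h := (((ha.add he).mul (ha.add (he.const_mul 2))).sub
          ((((ha.add he).sub (tendsto_const_nhds (x := (1:ℝ)))).mul
            ((ha.add (he.const_mul 2)).sub (tendsto_const_nhds (x := (1:ℝ))))).const_mul 3)).div_const 2
        have hv : ((c + 0) * (c + 2 * 0) - 3 * (((c + 0) - 1) * ((c + 2 * 0) - 1))) / 2
            = -c ^ 2 + 3 * c - 3 / 2 := by ring
        rw [hv] at h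
        refine h.congr fun n => ?_
        ring
      refine Tendsto.congr' ?_ hfin
      filter_upwards [hfacts] with n hf
      obtain ⟨hn2, hnm, hm2⟩ := hf
      have hn0 : (n:ℝ) ≠ 0 := by positivity
      set m := ⌊c * ((n:ℝ)-1)⌋₊ with hmm
      have h3 : 2 * ((C3 n n n m : ℤ) : ℝ)
          = ((m:ℝ)+1)*((m:ℝ)+2) - 3*((m:ℝ)+1-n)*((m:ℝ)+2-n) := by
        exact_mod_cast congrArg (fun z : ℤ => (z:ℝ)) (C3_case2 n m hn2 hnm hm2)
      have hc3 : (C3 n n n m : ℝ)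
          = (((m:ℝ)+1)*((m:ℝ)+2) - 3*((m:ℝ)+1-n)*((m:ℝ)+2-n)) / 2 := by
        push_cast at h3
        linarith
      simp only [hA, hE]
      rw [hc3]
      field_simp
      rfl
    · have hfin : Tendsto (fun n => ((A n + E n) * (A n + 2 * E n) * (A n + 3 * E n)
          - 3 * ((A n + E n) - 1) * ((A n + 2 * E n) - 1) * ((A n + 3 * E n) - 1)) / 6) atTop
          (nhds (-c ^ 3 / 3 + 3 * c ^ 2 / 2 - 3 * c / 2 + 1 / 2)) := by
        have h := ((((ha.add he).mul (ha.add (he.const_mul 2))).mul (ha.add (he.const_mul 3))).sub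
          (((((ha.add he).sub (tendsto_const_nhds (x := (1:ℝ)))).mul
            ((ha.add (he.const_mul 2)).sub (tendsto_const_nhds (x := (1:ℝ))))).mul
            ((ha.add (he.const_mul 3)).sub (tendsto_const_nhds (x := (1:ℝ))))).const_mul 3)).div_const 6
        have hv : ((c + 0) * (c + 2 * 0) * (c + 3 * 0)
            - 3 * ((((c + 0) - 1) * ((c + 2 * 0) - 1)) * ((c + 3 * 0) - 1))) / 6
            = -c ^ 3 / 3 + 3 * c ^ 2 / 2 - 3 * c / 2 + 1 / 2 := by ring
        rw [hv] at h
        refine h.congr fun n => ?_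
        ring
      refine Tendsto.congr' ?_ hfin
      filter_upwards [hfacts] with n hf
      obtain ⟨hn2, hnm, hm2⟩ := hf
      have hn0 : (n:ℝ) ≠ 0 := by positivity
      set m := ⌊c * ((n:ℝ)-1)⌋₊ with hmm
      have h3 : 6 * ((S3 n n n m : ℤ) : ℝ)
          = ((m:ℝ)+1)*((m:ℝ)+2)*((m:ℝ)+3) - 3*((m:ℝ)+1-n)*((m:ℝ)+2-n)*((m:ℝ)+3-n) := by
        exact_mod_cast congrArg (fun z : ℤ => (z:ℝ)) (S3_case2 n m hn2 hnm hm2)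
      have hc3 : (S3 n n n m : ℝ)
          = (((m:ℝ)+1)*((m:ℝ)+2)*((m:ℝ)+3) - 3*((m:ℝ)+1-n)*((m:ℝ)+2-n)*((m:ℝ)+3-n)) / 6 := by
        push_cast at h3
        linarith
      simp only [hA, hE]
      rw [hc3]
      field_simp
      rfl
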